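/- For all integers N, k, l with 0 ≤ l ≤ k ≤ N: Σ_{i=0}^{k} C(k,i) · C(N−k,i) · (k−i)·(k−i−1)···(k−i−l+1) = k·(k−1)···(k−l+1) · C(N−l, N−k), where the falling factorial (m)·(m−1)···(m−l+1) is understood to be 0 when m < l and to be 1 when l = 0, and C(·,·) denotes the binomial coefficient. -/

import Mathlib

theorem stmt10 (N k l : ℕ) (hlk : l ≤ k) (hkN : k ≤ N) :
    ∑ i ∈ Finset.range (k + 1),
        k.choose i * (N - k).choose i * (k - i).descFactorial l
      = k.descFactorial l * (N - l).choose (N - k) := by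
  have key : ∀ i : ℕ, k.choose i * (N - k).choose i * (k - i).descFactorial l
      = k.descFactorial l * ((k - l).choose i * (N - k).choose i) := by
    intro i
    rw [Nat.descFactorial_eq_factorial_mul_choose, Nat.descFactorial_eq_factorial_mul_choose]
    by_cases h : i + l ≤ k
    · have h1 : k.choose (i + l) * (i + l).choose i = k.choose i * (k - i).choose l := by
        have := Nat.choose_mul (n := k) (Nat.le_add_right i l)
        simpa using this
      have h2 : k.choose (i + l) * (i + l).choose l = k.choose l * (k - l).choose i := by
        have := Nat.choose_mul (n := k) (Nat.le_add_left l i)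
        simpa using this
      have h3 : (i + l).choose i = (i + l).choose l := by
        have := Nat.choose_symm (Nat.le_add_left l i)
        simpa using this
      have h4 : k.choose i * (k - i).choose l = k.choose l * (k - l).choose i := by
        rw [← h1, h3, h2]
      calc k.choose i * (N - k).choose i * (Nat.factorial l * (k - i).choose l)
          = Nat.factorial l * (k.choose i * (k - i).choose l) * (N - k).choose i := by ring
        _ = Nat.factorial l * (k.choose l * (k - l).choose i) * (N - k).choose i := by rw [h4]
        _ = Nat.factorial l * k.choose l * ((k - l).choose i * (N - k).choose i) := by ring
    · have h2 : (k - l).choose i = 0 := Nat.choose_eq_zero_of_lt (by omega)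
      rcases le_or_gt i k with hik | hik
      · have h1 : (k - i).choose l = 0 := Nat.choose_eq_zero_of_lt (by omega)
        simp [h1, h2]
      · simp [Nat.choose_eq_zero_of_lt hik, h2]
  simp_rw [key]
  rw [← Finset.mul_sum]
  congr 1
  have hNl : N - l = (k - l) + (N - k) := by omega
  rw [hNl, Nat.add_choose_eq, Finset.Nat.sum_antidiagonal_eq_sum_range_succ_mk]
  have hsym : ∀ i ∈ Finset.range (N - k + 1),
      (k - l).choose i * (N - k).choose (N - k - i)
      = (k - l).choose i * (N - k).choose i := by
    intro i hi
    rw [Nat.choose_symm (by simp at hi; omega)]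
  rw [Finset.sum_congr rfl hsym]
  have e1 : ∑ i ∈ Finset.range (k + 1), (k - l).choose i * (N - k).choose i
      = ∑ i ∈ Finset.range (N + 1), (k - l).choose i * (N - k).choose i := by
    apply Finset.sum_subset
    · intro x hx; simp at hx ⊢; omega
    · intro i _ hi
      simp only [Finset.mem_range, not_lt] at hi
      rw [Nat.choose_eq_zero_of_lt (show k - l < i by omega), zero_mul]
  have e2 : ∑ i ∈ Finset.range (N - k + 1), (k - l).choose i * (N - k).choose i
      = ∑ i ∈ Finset.range (N + 1), (k - l).choose i * (N - k).choose i := by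
    apply Finset.sum_subset
    · intro x hx; simp at hx ⊢; omega
    · intro i _ hi
      simp only [Finset.mem_range, not_lt] at hi
      rw [Nat.choose_eq_zero_of_lt (show N - k < i by omega), mul_zero]
  rw [e1, ← e2]
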